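/- For 1/2 < p < 1, let t̂ ∈ (0, 2p-1) satisfy t̂ log(p/(1-p)) = D_KL((1+t̂)/2 || p), and set p̂ = (1+t̂)/2, q̂ = 1 - p̂. Then the groupthink rate g_p = D_KL(q̂ || p) satisfies a_p < g_p < b_p, where a_p = D_KL(1/2 || p) and b_p = D_KL(q* || p) with q* = 1 - (1 + a_p/log(p/(1-p)))/2. -/

import Mathlib

/-- Bernoulli Kullback-Leibler divergence `D_KL(x || p)`. -/
noncomputable def klBer (x p : ℝ) : ℝ :=
  x * Real.log (x / p) + (1 - x) * Real.log ((1 - x) / (1 - p))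

lemma klBer_hasDerivAt {p t : ℝ} (hp0 : 0 < p) (hp1 : p < 1) (ht0 : 0 < t) (ht1 : t < 1) :
    HasDerivAt (fun x => klBer x p)
      (Real.log (t / p) - Real.log ((1 - t) / (1 - p))) t := by
  have h1p : 0 < 1 - p := by linarith
  have h1t : 0 < 1 - t := by linarith
  have hlog1 : HasDerivAt (fun x : ℝ => Real.log (x / p)) (1 / t) t := by
    have h := (Real.hasDerivAt_log (x := t / p) (by positivity)).comp t
      ((hasDerivAt_id t).div_const p)
    refine h.congr_deriv ?_
    field_simp
  have hlog2 : HasDerivAt (fun x : ℝ => Real.log ((1 - x) / (1 - p))) (-(1 / (1 - t))) t := by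
    have hinner : HasDerivAt (fun x : ℝ => (1 - x) / (1 - p)) (-1 / (1 - p)) t :=
      ((hasDerivAt_id t).const_sub 1).div_const (1 - p)
    have h := (Real.hasDerivAt_log (x := (1 - t) / (1 - p)) (by positivity)).comp t hinner
    refine h.congr_deriv ?_
    field_simp
  have hA : HasDerivAt (fun x : ℝ => x * Real.log (x / p)) (Real.log (t / p) + 1) t := by
    have h := (hasDerivAt_id t).mul hlog1
    refine h.congr_deriv ?_
    simp only [id]
    field_simp
  have hB : HasDerivAt (fun x : ℝ => (1 - x) * Real.log ((1 - x) / (1 - p)))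
      (-Real.log ((1 - t) / (1 - p)) - 1) t := by
    have h := ((hasDerivAt_id t).const_sub 1).mul hlog2
    refine h.congr_deriv ?_
    simp only [id]
    field_simp
    ring
  have h := hA.add hB
  refine h.congr_deriv ?_
  ring

lemma klBer_anti {p x y : ℝ} (hp1 : p < 1) (hx : 0 < x) (hxy : x < y) (hyp : y < p) :
    klBer y p < klBer x p := by
  have hp0 : 0 < p := lt_trans hx (lt_trans hxy hyp)
  have H : StrictAntiOn (fun t => klBer t p) (Set.Icc x y) := by
    apply strictAntiOn_of_deriv_neg (convex_Icc x y)
    · intro t ht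
      exact (klBer_hasDerivAt hp0 hp1 (lt_of_lt_of_le hx ht.1)
        (by linarith [ht.2])).continuousAt.continuousWithinAt
    · intro t ht
      rw [interior_Icc] at ht
      have ht0 : 0 < t := hx.trans ht.1
      have htp : t < p := ht.2.trans hyp
      have ht1 : t < 1 := htp.trans hp1
      rw [(klBer_hasDerivAt hp0 hp1 ht0 ht1).deriv]
      have l1 : Real.log (t / p) < 0 :=
        Real.log_neg (by positivity) (by rw [div_lt_one hp0]; exact htp)
      have l2 : 0 < Real.log ((1 - t) / (1 - p)) :=
        Real.log_pos (by rw [lt_div_iff₀ (by linarith)]; linarith)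
      linarith
  exact H (Set.left_mem_Icc.mpr hxy.le) (Set.right_mem_Icc.mpr hxy.le) hxy

theorem stmt18 (p th ph qh a b g qs : ℝ) (hp : 1/2 < p) (hp1 : p < 1)
    (hth : th ∈ Set.Ioo 0 (2*p - 1))
    (htheq : th * Real.log (p / (1 - p)) = klBer ((1 + th)/2) p)
    (hph : ph = (1 + th)/2) (hqh : qh = 1 - ph)
    (hg : g = klBer qh p)
    (ha : a = klBer (1/2) p)
    (hqs : qs = 1 - (1 + a / Real.log (p / (1 - p)))/2)
    (hb : b = klBer qs p) :
    a < g ∧ g < b := by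
  obtain ⟨hth0, hth1⟩ := hth
  have hp0 : (0:ℝ) < p := by linarith
  have h1p : (0:ℝ) < 1 - p := by linarith
  set L := Real.log (p / (1 - p)) with hLdef
  have hLpos : 0 < L := Real.log_pos (by rw [lt_div_iff₀ h1p]; linarith)
  have hqh' : qh = (1 - th)/2 := by rw [hqh, hph]; ring
  have hqh0 : 0 < qh := by rw [hqh']; linarith
  have hqh2 : qh < 1/2 := by rw [hqh']; linarith
  have hag : a < g := by
    rw [ha, hg]; exact klBer_anti hp1 hqh0 hqh2 hp
  -- klBer ph p < a
  have hph1 : klBer ((1 + th)/2) p < klBer (1/2) p :=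
    klBer_anti hp1 (by norm_num) (by linarith) (by linarith)
  have hthL : th * L < a := by rw [ha, hLdef, htheq]; exact hph1
  have hthaL : th < a / L := (lt_div_iff₀ hLpos).mpr hthL
  -- a < L
  have haL : a < L := by
    have hLeq : L = Real.log p - Real.log (1 - p) := Real.log_div hp0.ne' h1p.ne'
    have e1 : Real.log ((1:ℝ)/2 / p) = Real.log (1/2) - Real.log p :=
      Real.log_div (by norm_num) hp0.ne'
    have e2 : Real.log ((1:ℝ) - 1/2) = Real.log (1/2) := by norm_num
    have e3 : Real.log ((1:ℝ)/2 / (1 - p)) = Real.log (1/2) - Real.log (1 - p) :=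
      Real.log_div (by norm_num) h1p.ne'
    have hlp : Real.log (1/2) < Real.log p := Real.log_lt_log (by norm_num) hp
    have hlq : Real.log (1 - p) < Real.log (1/2) := Real.log_lt_log h1p (by linarith)
    have ha' : a = 1/2 * (Real.log (1/2) - Real.log p)
        + 1/2 * (Real.log (1/2) - Real.log (1 - p)) := by
      have h12 : (1:ℝ) - 1/2 = 1/2 := by norm_num
      rw [ha]; unfold klBer
      rw [h12, e1, e3]
    have hlog2 : Real.log (1/2) = -Real.log 2 := by
      rw [one_div, Real.log_inv]
    rw [ha', hLeq, hlog2]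
    have hl2 : 0 < Real.log 2 := Real.log_pos (by norm_num)
    rw [hlog2] at hlp hlq
    linarith
  have haL1 : a / L < 1 := (div_lt_one hLpos).mpr haL
  have hqs' : qs = (1 - a / L)/2 := by rw [hqs, hLdef]; ring
  have hqs0 : 0 < qs := by rw [hqs']; linarith
  have hqsqh : qs < qh := by rw [hqs', hqh']; linarith
  have hgb : g < b := by
    rw [hg, hb]; exact klBer_anti hp1 hqs0 hqsqh (by linarith)
  exact ⟨hag, hgb⟩
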